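/- The average path length of the graph G_t satisfies lim_{t→∞} D̄(t)/t = 4/9. -/

import Mathlib

open Filter Finset

/-- A letter of the alphabet `{1,2,3}`. -/
abbrev Letter := Fin 3

/-- A word: a finite (possibly empty) sequence of letters. -/
abbrev Word := List Letter

/-- Adjacency of two words: `σ ≠ τ`, and writing `σ = β ++ σ'`, `τ = β ++ τ'` with `β`
the longest common prefix, either one of `σ'`, `τ'` is empty and the other uses at most two
distinct letters, or `σ' = i j^k` and `τ' = j i^{k'}` for distinct letters `i ≠ j`. -/
def WordAdj (σ τ : Word) : Prop :=
  σ ≠ τ ∧ ∃ β σ' τ' : Word,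
    σ = β ++ σ' ∧ τ = β ++ τ' ∧
    ((σ' = [] ∧ τ'.toFinset.card ≤ 2) ∨
     (τ' = [] ∧ σ'.toFinset.card ≤ 2) ∨
     (∃ (i j : Letter) (k k' : ℕ), i ≠ j ∧
        σ' = i :: List.replicate k j ∧ τ' = j :: List.replicate k' i))

/-- The graph `G_t`: vertices are the words of length at most `t` (all other words are
isolated), with adjacency `WordAdj`. -/
def Gt (t : ℕ) : SimpleGraph Word where
  Adj σ τ := σ.length ≤ t ∧ τ.length ≤ t ∧ WordAdj σ τ
  symm := ⟨by
    rintro σ τ ⟨h1, h2, hne, β, σ', τ', e1, e2, h3⟩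
    refine ⟨h2, h1, hne.symm, β, τ', σ', e2, e1, ?_⟩
    rcases h3 with h | h | ⟨i, j, k, k', hij, hs, ht⟩
    · exact Or.inr (Or.inl h)
    · exact Or.inl h
    · exact Or.inr (Or.inr ⟨j, i, k', k, hij.symm, ht, hs⟩)⟩
  loopless := ⟨fun σ h => h.2.2.1 rfl⟩

/-- `dW t σ τ` is the geodesic distance `d_t(σ,τ)` in the graph `G_t`. -/
noncomputable def dW (t : ℕ) (σ τ : Word) : ℕ := (Gt t).dist σ τ

/-- Length of the longest suffix of `σ` using at most two distinct letters. -/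
def suffLen (σ : Word) : ℕ :=
  Nat.findGreatest (fun m => (σ.drop (σ.length - m)).toFinset.card ≤ 2) σ.length

/-- `fW σ = τ₂` where `σ = τ₂τ₁` and `τ₁` is the longest suffix of `σ` using at most two
distinct letters; `fW [] = []`. -/
def fW (σ : Word) : Word := σ.take (σ.length - suffLen σ)

/-- `ω(σ)`: the least `n ≥ 0` with `f^[n] σ = ∅`. -/
noncomputable def omegaW (σ : Word) : ℕ := sInf {n : ℕ | fW^[n] σ = []}

/-- `L(σ) = d_{|σ|}(σ, ∅) - 1` for nonempty `σ`, and `L(∅) = 0`. -/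
noncomputable def Lw (σ : Word) : ℕ := if σ = [] then 0 else dW σ.length σ [] - 1

/-- `ᾱ_m`: the average of `L` over the `3^m` words of length `m`. -/
noncomputable def alphaBar (m : ℕ) : ℝ :=
  (∑ v : Fin m → Letter, (Lw (List.ofFn v) : ℝ)) / 3 ^ m

/-- `α* = sup_{m ≥ 1} ᾱ_m / m`. -/
noncomputable def alphaStar : ℝ :=
  sSup {x : ℝ | ∃ m : ℕ, 1 ≤ m ∧ x = alphaBar m / m}

/-- `#V_t = (3^{t+1} - 1)/2`, the number of vertices of `G_t`, as a real number. -/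
noncomputable def Nv (t : ℕ) : ℝ := ((3 : ℝ) ^ (t + 1) - 1) / 2

/-- The sum of `d_t(σ,τ)` over all ordered pairs of words `σ, τ ∈ V_t`
(twice the sum over unordered pairs of distinct words). -/
noncomputable def pairSum (t : ℕ) : ℝ :=
  ∑ k ∈ range (t + 1), ∑ l ∈ range (t + 1),
    ∑ v : Fin k → Letter, ∑ w : Fin l → Letter,
      (dW t (List.ofFn v) (List.ofFn w) : ℝ)

/-- The average path length `D̄(t)` of `G_t`. -/
noncomputable def Dbar (t : ℕ) : ℝ := pairSum t / (Nv t * (Nv t - 1))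

/-- `κ_t = (Σ_{σ ∈ V_t} L(σ)) / #V_t`. -/
noncomputable def kappa (t : ℕ) : ℝ :=
  (∑ k ∈ range (t + 1), ∑ v : Fin k → Letter, (Lw (List.ofFn v) : ℝ)) / Nv t

/-- `π_t`: the sum of `d_t(σ,τ)` over unordered pairs of distinct `σ, τ ∈ V_t`. -/
noncomputable def piT (t : ℕ) : ℝ := pairSum t / 2

/-- `μ_t`: the sum of `d_t(σ,τ)` over unordered pairs of distinct `σ, τ ∈ V_t`
having the same first letter. -/
noncomputable def muT (t : ℕ) : ℝ :=
  (∑ i : Letter, ∑ k ∈ range t, ∑ l ∈ range t,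
    ∑ v : Fin k → Letter, ∑ w : Fin l → Letter,
      (dW t (i :: List.ofFn v) (i :: List.ofFn w) : ℝ)) / 2

/-- `λ_t = Σ_{σ ∈ V_t, σ ≠ ∅} d_t(σ, ∅)`. -/
noncomputable def lambdaT (t : ℕ) : ℝ :=
  ∑ k ∈ Finset.Icc 1 t, ∑ v : Fin k → Letter, (dW t (List.ofFn v) [] : ℝ)

/-- `ν_t = Σ_{i<j} Σ_{|σ'|,|τ'| ≤ t-1} d_t(iσ', jτ')`. -/
noncomputable def nuT (t : ℕ) : ℝ :=
  ∑ i : Letter, ∑ j : Letter,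
    if i < j then
      ∑ k ∈ range t, ∑ l ∈ range t,
        ∑ v : Fin k → Letter, ∑ w : Fin l → Letter,
          (dW t (i :: List.ofFn v) (j :: List.ofFn w) : ℝ)
    else 0

/-- `IsNormalDecomp σ τs`: `τs = [τ₁, …, τ_l]` (with `l ≥ 1`) is a normal decomposition
of `σ`: `σ = τ₁⋯τ_l`; `#τ₁ ≤ 2`, `|τ₁| ≥ 1`; `#τ_i = 2`, `|τ_i| ≥ 2` for `i ≥ 2`; and for
`i < l` the last letter of `τ_i` is the unique letter of the alphabet not appearing
in `τ_{i+1}`. -/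
def IsNormalDecomp (σ : Word) (τs : List Word) : Prop :=
  σ = τs.flatten ∧ τs ≠ [] ∧
  (∀ i : Fin τs.length,
    (i.1 = 0 → 1 ≤ (τs.get i).length ∧ (τs.get i).toFinset.card ≤ 2) ∧
    (1 ≤ i.1 → 2 ≤ (τs.get i).length ∧ (τs.get i).toFinset.card = 2)) ∧
  (∀ i : ℕ, ∀ h : i + 1 < τs.length,
    ∃ c : Letter, (τs.get ⟨i, Nat.lt_of_succ_lt h⟩).getLast? = some c ∧
      c ∉ (τs.get ⟨i + 1, h⟩).toFinset ∧
      ∀ c' : Letter, c' ∉ (τs.get ⟨i + 1, h⟩).toFinset → c' = c)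

/-- `W_{k₁⋯k_l}`: the number of words of length `k₁ + ⋯ + k_l` admitting a normal
decomposition into blocks of lengths `k₁, …, k_l`. -/
noncomputable def Wcount (ks : List ℕ) : ℕ :=
  Nat.card {σ : Word // ∃ τs : List Word, IsNormalDecomp σ τs ∧ τs.map List.length = ks}

/-- `Ē(t) = 3^{-t} Σ_{q ≥ 1} Σ_{k₁ ≥ 1, k₂,…,k_q ≥ 2, k₁+⋯+k_q = t} (q-1)·W_{k₁⋯k_q}`. -/
noncomputable def Ebar (t : ℕ) : ℝ :=
  ((∑ c : Composition t,
      if ∀ i ∈ c.blocks.tail, 2 ≤ i then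
        (c.blocks.length - 1) * Wcount c.blocks
      else 0 : ℕ) : ℝ) / 3 ^ t

namespace APL

/-- One step of the right-to-left block-parsing automaton. -/
def stepA (c : Letter) (p : Finset Letter × ℕ) : Finset Letter × ℕ :=
  if (insert c p.1).card ≤ 2 then (insert c p.1, p.2) else ({c}, p.2 + 1)

/-- Run the automaton over a word (rightmost letter first). -/
def runA (σ : Word) (p : Finset Letter × ℕ) : Finset Letter × ℕ := σ.foldr stepA p

/-- Letters of the leftmost greedy block. -/
def stw (σ : Word) : Finset Letter := (runA σ (∅, 0)).1

/-- Number of cuts in the greedy block decomposition. -/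
def cutsW (σ : Word) : ℕ := (runA σ (∅, 0)).2

/-- Number of blocks in the greedy decomposition of `σ` into blocks using at most
two distinct letters. -/
def om (σ : Word) : ℕ := if σ = [] then 0 else cutsW σ + 1

@[simp] lemma runA_nil (p : Finset Letter × ℕ) : runA [] p = p := rfl

lemma runA_cons (x : Letter) (σ : Word) (p : Finset Letter × ℕ) :
    runA (x :: σ) p = stepA x (runA σ p) := rfl

lemma runA_append (u v : Word) (p : Finset Letter × ℕ) :
    runA (u ++ v) p = runA u (runA v p) := List.foldr_append

@[simp] lemma om_nil : om ([] : Word) = 0 := rfl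

lemma om_pos {σ : Word} (h : σ ≠ []) : 1 ≤ om σ := by simp [om, h]

lemma om_eq_cuts {σ : Word} (h : σ ≠ []) : om σ = cutsW σ + 1 := by simp [om, h]

/-- Coupling relation between two automaton runs. -/
def RelA (k : ℕ) (p q : Finset Letter × ℕ) : Prop :=
  (q.2 = p.2 + k ∧ p.1 ⊆ q.1) ∨ (q.2 = p.2 + k + 1 ∧ q.1 ⊆ p.1)

lemma stepA_eq (c : Letter) (p : Finset Letter × ℕ) :
    stepA c p = if (insert c p.1).card ≤ 2 then (insert c p.1, p.2) else ({c}, p.2 + 1) := rfl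

lemma stepA_rel {k : ℕ} {p q : Finset Letter × ℕ} (c : Letter) (h : RelA k p q) :
    RelA k (stepA c p) (stepA c q) := by
  rcases h with ⟨hn, hsub⟩ | ⟨hn, hsub⟩
  · by_cases hq : (insert c q.1).card ≤ 2
    · have hp : (insert c p.1).card ≤ 2 :=
        le_trans (Finset.card_le_card (Finset.insert_subset_insert _ hsub)) hq
      exact Or.inl (by rw [stepA_eq, stepA_eq, if_pos hp, if_pos hq]
                       exact ⟨hn, Finset.insert_subset_insert _ hsub⟩)
    · by_cases hp : (insert c p.1).card ≤ 2
      · refine Or.inr ?_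
        rw [stepA_eq, stepA_eq, if_pos hp, if_neg hq]
        exact ⟨by simp; omega, by simp⟩
      · refine Or.inl ?_
        rw [stepA_eq, stepA_eq, if_neg hp, if_neg hq]
        exact ⟨by simp; omega, by simp⟩
  · by_cases hp : (insert c p.1).card ≤ 2
    · have hq : (insert c q.1).card ≤ 2 :=
        le_trans (Finset.card_le_card (Finset.insert_subset_insert _ hsub)) hp
      exact Or.inr (by rw [stepA_eq, stepA_eq, if_pos hp, if_pos hq]
                       exact ⟨hn, Finset.insert_subset_insert _ hsub⟩)
    · by_cases hq : (insert c q.1).card ≤ 2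
      · refine Or.inl ?_
        rw [stepA_eq, stepA_eq, if_neg hp, if_pos hq]
        exact ⟨by simp; omega, by simp [Finset.singleton_subset_iff]⟩
      · refine Or.inr ?_
        rw [stepA_eq, stepA_eq, if_neg hp, if_neg hq]
        exact ⟨by simp; omega, by simp⟩

lemma runA_rel (σ : Word) {k : ℕ} {p q : Finset Letter × ℕ} (h : RelA k p q) :
    RelA k (runA σ p) (runA σ q) := by
  induction σ with
  | nil => simpa using h
  | cons x σ ih => rw [runA_cons, runA_cons]; exact stepA_rel x ih

lemma cutsW_append (u v : Word) :
    cutsW (u ++ v) = cutsW u + cutsW v ∨ cutsW (u ++ v) = cutsW u + cutsW v + 1 := by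
  have h0 : RelA (cutsW v) ((∅ : Finset Letter), 0) (stw v, cutsW v) :=
    Or.inl ⟨by simp, by simp⟩
  have h1 := runA_rel u h0
  have h2 : runA (u ++ v) (∅, 0) = runA u (stw v, cutsW v) := by
    rw [runA_append]; rfl
  rcases h1 with ⟨hn, -⟩ | ⟨hn, -⟩
  · left; rw [cutsW, h2, hn]; rfl
  · right; rw [cutsW, h2, hn]; rfl

lemma om_append_le (u v : Word) : om (u ++ v) ≤ om u + om v := by
  rcases eq_or_ne u [] with rfl | hu
  · simp
  rcases eq_or_ne v [] with rfl | hv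
  · simp
  have hne : u ++ v ≠ [] := by simp [hu]
  rw [om_eq_cuts hne, om_eq_cuts hu, om_eq_cuts hv]
  rcases cutsW_append u v with h | h <;> omega

lemma le_om_append {u v : Word} (hu : u ≠ []) (hv : v ≠ []) :
    om u + om v ≤ om (u ++ v) + 1 := by
  have hne : u ++ v ≠ [] := by simp [hu]
  rw [om_eq_cuts hne, om_eq_cuts hu, om_eq_cuts hv]
  rcases cutsW_append u v with h | h <;> omega

lemma om_prefix_le (u v : Word) : om u ≤ om (u ++ v) := by
  rcases eq_or_ne u [] with rfl | hu
  · simp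
  rcases eq_or_ne v [] with rfl | hv
  · simp
  have := le_om_append hu hv
  have := om_pos hv
  omega

lemma om_suffix_le (u v : Word) : om v ≤ om (u ++ v) := by
  rcases eq_or_ne u [] with rfl | hu
  · simp
  rcases eq_or_ne v [] with rfl | hv
  · simp
  have := le_om_append hu hv
  have := om_pos hu
  omega

lemma runA_fst (σ : Word) : (runA σ (∅, 0)).1 = stw σ := rfl
lemma runA_snd (σ : Word) : (runA σ (∅, 0)).2 = cutsW σ := rfl

lemma stw_cons (x : Letter) (σ : Word) :
    stw (x :: σ) = if (insert x (stw σ)).card ≤ 2 then insert x (stw σ) else {x} := by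
  show (stepA x (runA σ (∅, 0))).1 = _
  rw [stepA_eq, runA_fst]
  by_cases h : (insert x (stw σ)).card ≤ 2 <;> simp [h]

lemma cutsW_cons (x : Letter) (σ : Word) :
    cutsW (x :: σ) = cutsW σ + (if (insert x (stw σ)).card ≤ 2 then 0 else 1) := by
  show (stepA x (runA σ (∅, 0))).2 = _
  rw [stepA_eq, runA_fst]
  by_cases h : (insert x (stw σ)).card ≤ 2 <;> simp [h, runA_snd]

lemma mem_stw (x : Letter) (σ : Word) : x ∈ stw (x :: σ) := by
  rw [stw_cons]
  split <;> simp

lemma stw_card_le (σ : Word) : (stw σ).card ≤ 2 := by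
  cases σ with
  | nil => simp [stw, runA_nil]
  | cons x σ =>
    rw [stw_cons]
    split
    · assumption
    · simp

lemma stw_nonempty {σ : Word} (h : σ ≠ []) : (stw σ).Nonempty := by
  cases σ with
  | nil => exact absurd rfl h
  | cons x σ => exact ⟨x, mem_stw x σ⟩

lemma runA_of_card_le {σ : Word} (h : σ.toFinset.card ≤ 2) :
    stw σ ⊆ σ.toFinset ∧ cutsW σ = 0 := by
  induction σ with
  | nil => simp [stw, cutsW, runA_nil]
  | cons x σ ih =>
    have hsub : σ.toFinset ⊆ (x :: σ).toFinset := by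
      rw [List.toFinset_cons]; exact Finset.subset_insert _ _
    obtain ⟨hs, hc⟩ := ih (le_trans (Finset.card_le_card hsub) h)
    have hsub2 : insert x (stw σ) ⊆ (x :: σ).toFinset := by
      rw [List.toFinset_cons]
      exact Finset.insert_subset_insert _ hs
    have hcard : (insert x (stw σ)).card ≤ 2 := le_trans (Finset.card_le_card hsub2) h
    rw [stw_cons, cutsW_cons, if_pos hcard, if_pos hcard]
    exact ⟨hsub2, by omega⟩

lemma om_le_one {σ : Word} (h : σ.toFinset.card ≤ 2) : om σ ≤ 1 := by
  rcases eq_or_ne σ [] with rfl | hne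
  · simp
  · rw [om_eq_cuts hne, (runA_of_card_le h).2]

lemma om_eq_one {σ : Word} (hne : σ ≠ []) (h : σ.toFinset.card ≤ 2) : om σ = 1 :=
  le_antisymm (om_le_one h) (om_pos hne)

lemma stw_eq_toFinset {σ : Word} (h : cutsW σ = 0) : stw σ = σ.toFinset := by
  induction σ with
  | nil => simp [stw, runA_nil]
  | cons x σ ih =>
    rw [cutsW_cons] at h
    by_cases hcard : (insert x (stw σ)).card ≤ 2
    · rw [if_pos hcard] at h
      rw [stw_cons, if_pos hcard, List.toFinset_cons, ih (by omega)]
    · rw [if_neg hcard] at h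
      omega

lemma om_cons {σ : Word} (x : Letter) (h : σ ≠ []) :
    om (x :: σ) = om σ + (if (insert x (stw σ)).card ≤ 2 then 0 else 1) := by
  rw [om_eq_cuts (by simp : x :: σ ≠ ([] : Word)), om_eq_cuts h, cutsW_cons]
  omega

lemma om_single (x : Letter) : om [x] = 1 := by
  apply om_eq_one (by simp)
  simp

lemma om_le_length (σ : Word) : om σ ≤ σ.length := by
  induction σ with
  | nil => simp
  | cons x σ ih =>
    have h2 : om (x :: σ) ≤ om [x] + om σ := om_append_le [x] σ
    rw [om_single] at h2
    simp only [List.length_cons]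
    omega

/-- Greedy block decomposition step: any nonempty word splits off a rightmost block. -/
lemma om_decomp : ∀ σ : Word, σ ≠ [] →
    ∃ p s : Word, σ = p ++ s ∧ s ≠ [] ∧ s.toFinset.card ≤ 2 ∧ om p + 1 = om σ ∧
      (p ≠ [] → stw p = stw σ) := by
  intro σ hσ
  induction σ with
  | nil => exact absurd rfl hσ
  | cons x σ' ih =>
    rcases eq_or_ne σ' [] with rfl | hσ'
    · exact ⟨[], [x], by simp, by simp, by simp, by simp [om_single], by simp⟩
    obtain ⟨p', s', he, hs'ne, hs'card, hom', hstw'⟩ := ih hσ'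
    rcases eq_or_ne p' [] with rfl | hp'
    · -- σ' = s' is a single block
      simp only [List.nil_append] at he
      have hom1 : om σ' = 1 := by simpa using hom'.symm
      have hcut0 : cutsW σ' = 0 := by
        rw [om_eq_cuts hσ'] at hom1; omega
      by_cases hc : (insert x (stw σ')).card ≤ 2
      · refine ⟨[], x :: σ', by simp, by simp, ?_, ?_, by simp⟩
        · rw [List.toFinset_cons, ← stw_eq_toFinset hcut0]
          exact hc
        · rw [om_cons x hσ', if_pos hc, hom1]
          simp
      · refine ⟨[x], σ', rfl, hσ', by rw [he]; exact hs'card, ?_, ?_⟩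
        · rw [om_cons x hσ', if_neg hc, om_single, hom1]
        · intro _
          rw [stw_cons x σ', if_neg hc, stw_cons x []]
          simp [stw, runA_nil]
    · -- p' ≠ []: extend the leftmost block region
      refine ⟨x :: p', s', by rw [he]; rfl, hs'ne, hs'card, ?_, ?_⟩
      · rw [om_cons x hσ', om_cons x hp', hstw' hp']
        omega
      · intro _
        rw [stw_cons, stw_cons, hstw' hp']

/-! ### Walks: upper bound on distance -/

lemma exists_walk_nil (t : ℕ) :
    ∀ n (σ : Word), σ.length ≤ n → σ.length ≤ t →
      ∃ p : (Gt t).Walk σ [], p.length ≤ om σ := by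
  intro n
  induction n with
  | zero =>
    intro σ hn _
    have : σ = [] := List.eq_nil_of_length_eq_zero (by omega)
    subst this
    exact ⟨SimpleGraph.Walk.nil, by simp⟩
  | succ n ih =>
    intro σ hn ht
    rcases eq_or_ne σ [] with rfl | hσ
    · exact ⟨SimpleGraph.Walk.nil, by simp⟩
    obtain ⟨p, s, hps, hsne, hscard, hom, -⟩ := om_decomp σ hσ
    have hlen : p.length + s.length = σ.length := by rw [hps]; simp
    have hslen : 1 ≤ s.length := List.length_pos_iff.mpr hsne
    obtain ⟨q, hq⟩ := ih p (by omega) (by omega)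
    have hadj : (Gt t).Adj σ p := by
      show σ.length ≤ t ∧ p.length ≤ t ∧ WordAdj σ p
      refine ⟨ht, by omega, ?_, p, s, [], hps, by simp, Or.inr (Or.inl ⟨rfl, hscard⟩)⟩
      intro h
      rw [h] at hlen
      omega
    refine ⟨SimpleGraph.Walk.cons hadj q, ?_⟩
    simp only [SimpleGraph.Walk.length_cons]
    omega

lemma walk_to_nil {t : ℕ} {σ : Word} (h : σ.length ≤ t) :
    ∃ p : (Gt t).Walk σ [], p.length ≤ om σ :=
  exists_walk_nil t σ.length σ le_rfl h

lemma reachable_words {t : ℕ} {σ τ : Word} (hσ : σ.length ≤ t) (hτ : τ.length ≤ t) :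
    (Gt t).Reachable σ τ := by
  obtain ⟨p, -⟩ := walk_to_nil hσ
  obtain ⟨q, -⟩ := walk_to_nil hτ
  exact ⟨p.append q.reverse⟩

lemma dist_le_om {t : ℕ} {σ τ : Word} (hσ : σ.length ≤ t) (hτ : τ.length ≤ t) :
    (Gt t).dist σ τ ≤ om σ + om τ := by
  obtain ⟨p, hp⟩ := walk_to_nil hσ
  obtain ⟨q, hq⟩ := walk_to_nil hτ
  calc (Gt t).dist σ τ ≤ (p.append q.reverse).length := SimpleGraph.dist_le _
    _ ≤ om σ + om τ := by
        rw [SimpleGraph.Walk.length_append, SimpleGraph.Walk.length_reverse]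
        omega

/-! ### Longest common prefix -/

def lcp : Word → Word → Word
  | x :: u, y :: v => if x = y then x :: lcp u v else []
  | _, _ => []

@[simp] lemma lcp_nil_left (v : Word) : lcp [] v = [] := by cases v <;> rfl

@[simp] lemma lcp_nil_right (u : Word) : lcp u [] = [] := by cases u <;> rfl

lemma lcp_cons (x y : Letter) (u v : Word) :
    lcp (x :: u) (y :: v) = if x = y then x :: lcp u v else [] := rfl

lemma lcp_prefix_left : ∀ u v : Word, lcp u v <+: u := by
  intro u
  induction u with
  | nil => intro v; simp
  | cons x u ih =>
    intro v
    cases v with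
    | nil => simp
    | cons y v =>
      rw [lcp_cons]
      split
      · exact List.cons_prefix_cons.mpr ⟨rfl, ih v⟩
      · exact List.nil_prefix

lemma lcp_prefix_right : ∀ u v : Word, lcp u v <+: v := by
  intro u
  induction u with
  | nil => intro v; simp
  | cons x u ih =>
    intro v
    cases v with
    | nil => simp
    | cons y v =>
      rw [lcp_cons]
      split
      · rename_i h
        rw [h]
        exact List.cons_prefix_cons.mpr ⟨rfl, ih v⟩
      · exact List.nil_prefix

lemma lcp_append (β : Word) : ∀ a b : Word, lcp (β ++ a) (β ++ b) = β ++ lcp a b := by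
  induction β with
  | nil => intro a b; simp
  | cons x β ih =>
    intro a b
    simp [List.cons_append, lcp_cons, ih]

lemma prefix_lcp {u v : Word} (h : u <+: v) : lcp u v = u := by
  obtain ⟨r, rfl⟩ := h
  have := lcp_append u [] r
  simpa using this

lemma lcp_self (u : Word) : lcp u u = u := prefix_lcp (List.prefix_refl u)

/-! ### The potential function -/

def hpot (τ x : Word) : ℕ :=
  om (x.drop (lcp x τ).length) + om (τ.drop (lcp x τ).length) +
    (if x <+: τ then 1 else 0)

lemma hpot_self (τ : Word) : hpot τ τ = 1 := by
  rw [hpot, lcp_self, List.drop_length, if_pos (List.prefix_refl τ)]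
  simp

lemma hpot_append (β τ₁ x₁ : Word) : hpot (β ++ τ₁) (β ++ x₁) = hpot τ₁ x₁ := by
  rw [hpot, hpot, lcp_append, List.length_append]
  simp only [List.prefix_append_right_inj]
  congr 2
  · rw [← List.drop_drop, List.drop_left]
  · rw [← List.drop_drop, List.drop_left]

lemma card_prefix_le {u v : Word} (h : u <+: v) : u.toFinset.card ≤ v.toFinset.card :=
  Finset.card_le_card (fun x hx => by
    rw [List.mem_toFinset] at *
    exact h.subset hx)

lemma hpot_nil (t : Word) : hpot t [] = om t + 1 := by
  rw [hpot]
  simp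

lemma drop_eq_of_append {a b c : Word} (h : a ++ b = c) : c.drop a.length = b := by
  rw [← h]
  exact List.drop_left

/-- Key computation: the potential of a ≤2-letter extension of a prefix of `τ`. -/
lemma hpot_block {t X : Word} (hX : X ≠ []) (hc : X.toFinset.card ≤ 2) :
    om t ≤ hpot t X ∧ hpot t X ≤ om t + 1 := by
  obtain ⟨X₁, hX₁⟩ := lcp_prefix_left X t
  obtain ⟨t₁, ht₁⟩ := lcp_prefix_right X t
  have hρc : (lcp X t).toFinset.card ≤ 2 :=
    le_trans (card_prefix_le ⟨X₁, hX₁⟩) hc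
  have homt : om t ≤ om t₁ + 1 := by
    calc om t = om (lcp X t ++ t₁) := by rw [ht₁]
      _ ≤ om (lcp X t) + om t₁ := om_append_le _ _
      _ ≤ om t₁ + 1 := by have := om_le_one hρc; omega
  have homt2 : om t₁ ≤ om t := by
    conv_rhs => rw [← ht₁]
    exact om_suffix_le _ _
  have hdx : X.drop (lcp X t).length = X₁ := drop_eq_of_append hX₁
  have hdt : t.drop (lcp X t).length = t₁ := drop_eq_of_append ht₁
  have hkey : hpot t X = om t₁ + 1 := by
    rcases eq_or_ne X₁ [] with rfl | hX₁ne
    · have hXeq : X = lcp X t := ((by simpa using hX₁ : lcp X t = X)).symm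
      have hpre : X <+: t := by
        refine ⟨t₁, ?_⟩
        conv_lhs => rw [hXeq]
        exact ht₁
      rw [hpot, hdx, hdt, if_pos hpre]
      simp
    · have hnpre : ¬ X <+: t := by
        intro hpre
        have h2 : X ++ X₁ = X := by rw [prefix_lcp hpre] at hX₁; exact hX₁
        have := congrArg List.length h2
        simp only [List.length_append] at this
        exact hX₁ne (List.eq_nil_of_length_eq_zero (by omega))
      have hX₁c : X₁.toFinset.card ≤ 2 := by
        refine le_trans (Finset.card_le_card fun a ha => ?_) hc
        rw [List.mem_toFinset] at *
        rw [← hX₁]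
        exact List.mem_append_right _ ha
      rw [hpot, hdx, hdt, if_neg hnpre, om_eq_one hX₁ne hX₁c]
      omega
  omega

/-- Potential in the case where the common prefix stops strictly inside `β₁`. -/
lemma hpot_nonprefix {τ₁ β₁ : Word} (X : Word) (hβ : β₁ ≠ []) (hl : lcp β₁ τ₁ = []) :
    hpot τ₁ (β₁ ++ X) = om (β₁ ++ X) + om τ₁ := by
  obtain ⟨b, β₁', rfl⟩ := List.exists_cons_of_ne_nil hβ
  have hlcp : lcp ((b :: β₁') ++ X) τ₁ = [] := by
    cases τ₁ with
    | nil => simp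
    | cons c τ₁' =>
      rw [lcp_cons] at hl
      have hbc : b ≠ c := by
        intro h
        rw [if_pos h] at hl
        simp at hl
      rw [List.cons_append, lcp_cons, if_neg hbc]
  have hnpre : ¬ (b :: β₁') ++ X <+: τ₁ := by
    intro hpre
    have := prefix_lcp hpre
    rw [hlcp] at this
    simp at this
  rw [hpot, hlcp, if_neg hnpre]
  simp

lemma lcp_decomp (β : Word) : ∀ τ : Word, ∃ γ β₁ τ₁ : Word,
    γ = lcp β τ ∧ β = γ ++ β₁ ∧ τ = γ ++ τ₁ ∧ lcp β₁ τ₁ = [] := by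
  induction β with
  | nil => intro τ; exact ⟨[], [], τ, by simp, rfl, rfl, by simp⟩
  | cons x β' ih =>
    intro τ
    cases τ with
    | nil => exact ⟨[], x :: β', [], by simp, rfl, rfl, by simp⟩
    | cons y τ' =>
      by_cases hxy : x = y
      · subst hxy
        obtain ⟨γ', β₁, τ₁, hγ', hβ, hτ, hl⟩ := ih τ'
        exact ⟨x :: γ', β₁, τ₁, by rw [lcp_cons, if_pos rfl, ← hγ'],
          by rw [List.cons_append, ← hβ], by rw [List.cons_append, ← hτ], hl⟩
      · exact ⟨[], x :: β', y :: τ', by rw [lcp_cons, if_neg hxy],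
          rfl, rfl, by rw [lcp_cons, if_neg hxy]⟩

lemma card_cons_replicate (i j : Letter) (k : ℕ) :
    (i :: List.replicate k j).toFinset.card ≤ 2 := by
  have hsub : (i :: List.replicate k j).toFinset ⊆ {i, j} := by
    intro a ha
    simp only [List.toFinset_cons, Finset.mem_insert, List.mem_toFinset] at ha
    rcases ha with rfl | ha
    · simp
    · simp [List.eq_of_mem_replicate ha]
  refine le_trans (Finset.card_le_card hsub) ?_
  exact le_trans (Finset.card_insert_le _ _) (by simp)

/-- The potential `hpot τ` changes by at most 1 along any edge. -/
lemma hpot_lip (τ : Word) {u v : Word} (h : WordAdj u v) : hpot τ v ≤ hpot τ u + 1 := by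
  obtain ⟨hne, β, X, Y, hu, hv, hcase⟩ := h
  have hXc : X.toFinset.card ≤ 2 := by
    rcases hcase with ⟨rfl, -⟩ | ⟨-, hX⟩ | ⟨i, j, k, k', hij, rfl, -⟩
    · simp
    · exact hX
    · exact card_cons_replicate i j k
  have hYc : Y.toFinset.card ≤ 2 := by
    rcases hcase with ⟨-, hY⟩ | ⟨rfl, -⟩ | ⟨i, j, k, k', hij, -, rfl⟩
    · exact hY
    · simp
    · exact card_cons_replicate j i k'
  subst hu hv
  by_cases hp : β <+: τ
  · obtain ⟨t, rfl⟩ := hp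
    rw [hpot_append, hpot_append]
    have key : ∀ Z : Word, Z.toFinset.card ≤ 2 → om t ≤ hpot t Z ∧ hpot t Z ≤ om t + 1 := by
      intro Z hZ
      rcases eq_or_ne Z [] with rfl | hZne
      · rw [hpot_nil]; omega
      · exact hpot_block hZne hZ
    have h1 := key X hXc
    have h2 := key Y hYc
    omega
  · obtain ⟨γ, β₁, τ₁, hγ, hβ, hτ, hl⟩ := lcp_decomp β τ
    have hβ₁ne : β₁ ≠ [] := by
      rintro rfl
      rw [List.append_nil] at hβ
      exact hp (by rw [hβ, hτ]; exact ⟨τ₁, rfl⟩)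
    have hrw : ∀ Z : Word, hpot τ (β ++ Z) = om (β₁ ++ Z) + om τ₁ := by
      intro Z
      rw [hβ, hτ, List.append_assoc, hpot_append]
      exact hpot_nonprefix Z hβ₁ne hl
    rw [hrw X, hrw Y]
    have b1 : om β₁ ≤ om (β₁ ++ X) := om_prefix_le _ _
    have b2 : om (β₁ ++ Y) ≤ om β₁ + om Y := om_append_le _ _
    have b3 : om Y ≤ 1 := om_le_one hYc
    omega

lemma hpot_le_walk {t : ℕ} {τ x : Word} (p : (Gt t).Walk x τ) : hpot τ x ≤ p.length + 1 := by
  induction p with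
  | nil => rw [hpot_self]; simp
  | @cons a b c h p ih =>
    have hstep := hpot_lip c ((h.symm : b.length ≤ t ∧ a.length ≤ t ∧ WordAdj b a).2.2)
    simp only [SimpleGraph.Walk.length_cons]
    omega

/-- Lower bound: distance is at least the sum of block counts minus lcp corrections. -/
lemma om_add_le_dist {t : ℕ} {σ τ : Word} (hσ : σ.length ≤ t) (hτ : τ.length ≤ t) :
    om σ + om τ ≤ (Gt t).dist σ τ + 2 * (lcp σ τ).length + 1 := by
  obtain ⟨p, hp⟩ := (reachable_words hσ hτ).exists_walk_length_eq_dist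
  have h1 : hpot τ σ ≤ (Gt t).dist σ τ + 1 := by
    rw [← hp]; exact hpot_le_walk p
  obtain ⟨γ, σ₁, τ₁, hγ, hσe, hτe, hl⟩ := lcp_decomp σ τ
  have h2 : om σ₁ + om τ₁ ≤ hpot τ σ := by
    rw [hσe, hτe, hpot_append, hpot, hl]
    simp only [List.length_nil, List.drop_zero]
    split <;> omega
  have h3 : om σ ≤ om γ + om σ₁ := by rw [hσe]; exact om_append_le _ _
  have h4 : om τ ≤ om γ + om τ₁ := by rw [hτe]; exact om_append_le _ _
  have h5 : om γ ≤ γ.length := om_le_length γ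
  have h6 : (lcp σ τ).length = γ.length := by rw [← hγ]
  omega

/-! ### Sums over words of fixed length -/

lemma sum_pi_succ {M : Type*} [AddCommMonoid M] {m : ℕ} (f : (Fin (m+1) → Letter) → M) :
    ∑ v : Fin (m+1) → Letter, f v = ∑ x : Letter, ∑ w : Fin m → Letter, f (Fin.cons x w) := by
  calc ∑ v : Fin (m+1) → Letter, f v
      = ∑ p : Letter × (Fin m → Letter), f (Fin.cons p.1 p.2) :=
        (Fintype.sum_equiv (Fin.consEquiv (fun _ => Letter))
          (fun p => f (Fin.cons p.1 p.2)) f (fun p => rfl)).symm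
    _ = ∑ x : Letter, ∑ w : Fin m → Letter, f (Fin.cons x w) := Fintype.sum_prod_type _

lemma ofFn_cons {m : ℕ} (x : Letter) (w : Fin m → Letter) :
    List.ofFn (Fin.cons x w) = x :: List.ofFn w := by
  simp [List.ofFn_succ]

lemma ofFn_ne_nil {m : ℕ} (hm : 1 ≤ m) (w : Fin m → Letter) : List.ofFn w ≠ [] := by
  intro h
  have : (List.ofFn w).length = m := List.length_ofFn
  rw [h] at this
  simp at this
  omega

lemma card_fun_letter (m : ℕ) : Fintype.card (Fin m → Letter) = 3^m := by
  rw [Fintype.card_fun]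
  simp

lemma sum_delta (S : Finset Letter) (h1 : S.Nonempty) (h2 : S.card ≤ 2) :
    (∑ x : Letter, if (insert x S).card ≤ 2 then 0 else 1) =
      (if S.card = 2 then 1 else 0) := by
  revert h1 h2
  revert S
  decide

lemma sum_delta2 (S : Finset Letter) (h1 : S.Nonempty) (h2 : S.card ≤ 2) :
    (∑ x : Letter,
      if (if (insert x S).card ≤ 2 then insert x S else {x}).card = 2 then 1 else 0) = 2 := by
  revert h1 h2
  revert S
  decide

/-- Sum of `om` over the words of length `m`. -/
def SN (m : ℕ) : ℕ := ∑ v : Fin m → Letter, om (List.ofFn v)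

/-- Number of words of length `m` whose leftmost block uses two letters. -/
def C2 (m : ℕ) : ℕ := ∑ v : Fin m → Letter, if (stw (List.ofFn v)).card = 2 then 1 else 0

/-- Sum of `om` over all words of length at most `t`. -/
def ANs (t : ℕ) : ℕ := ∑ k ∈ Finset.range (t+1), SN k

/-- Number of words of length at most `t`. -/
def NN (t : ℕ) : ℕ := ∑ k ∈ Finset.range (t+1), 3^k

lemma stw_single (x : Letter) : stw [x] = {x} := by
  rw [stw_cons]
  have : stw ([] : Word) = ∅ := rfl
  rw [this]
  simp

lemma SN_zero : SN 0 = 0 := by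
  rw [SN]
  simp [om]

lemma SN_one : SN 1 = 3 := by
  have h : ∀ v : Fin 1 → Letter, om (List.ofFn v) = 1 := by
    intro v
    have : List.ofFn v = [v 0] := by simp [List.ofFn_succ]
    rw [this, om_single]
  rw [SN, Finset.sum_congr rfl (fun v _ => h v), Finset.sum_const, Finset.card_univ,
    card_fun_letter]
  simp

lemma C2_one : C2 1 = 0 := by
  have h : ∀ v : Fin 1 → Letter, (stw (List.ofFn v)).card = 1 := by
    intro v
    have : List.ofFn v = [v 0] := by simp [List.ofFn_succ]
    rw [this, stw_single]
    simp
  rw [C2, Finset.sum_congr rfl (fun v _ => by rw [if_neg (by rw [h v]; omega)]),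
    Finset.sum_const]
  simp

lemma SN_succ {m : ℕ} (hm : 1 ≤ m) : SN (m+1) = 3 * SN m + C2 m := by
  rw [SN, sum_pi_succ]
  have h1 : ∀ x : Letter, ∀ w : Fin m → Letter,
      om (List.ofFn (Fin.cons x w)) =
        om (List.ofFn w) + (if (insert x (stw (List.ofFn w))).card ≤ 2 then 0 else 1) := by
    intro x w
    rw [ofFn_cons, om_cons x (ofFn_ne_nil hm w)]
  calc ∑ x : Letter, ∑ w : Fin m → Letter, om (List.ofFn (Fin.cons x w))
      = ∑ x : Letter, (SN m +
          ∑ w : Fin m → Letter, (if (insert x (stw (List.ofFn w))).card ≤ 2 then 0 else 1)) := by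
        refine Finset.sum_congr rfl fun x _ => ?_
        rw [Finset.sum_congr rfl (fun w _ => h1 x w), Finset.sum_add_distrib]
        rfl
    _ = 3 * SN m + ∑ x : Letter,
          ∑ w : Fin m → Letter, (if (insert x (stw (List.ofFn w))).card ≤ 2 then 0 else 1) := by
        rw [Finset.sum_add_distrib, Finset.sum_const, Finset.card_univ]
        have : Fintype.card Letter = 3 := by simp
        rw [this]
        ring_nf
    _ = 3 * SN m + ∑ w : Fin m → Letter,
          ∑ x : Letter, (if (insert x (stw (List.ofFn w))).card ≤ 2 then 0 else 1) := by
        rw [Finset.sum_comm]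
    _ = 3 * SN m + C2 m := by
        congr 1
        refine Finset.sum_congr rfl fun w _ => ?_
        exact sum_delta _ (stw_nonempty (ofFn_ne_nil hm w)) (stw_card_le _)

lemma C2_succ {m : ℕ} (hm : 1 ≤ m) : C2 (m+1) = 2 * 3^m := by
  rw [C2, sum_pi_succ]
  have h1 : ∀ x : Letter, ∀ w : Fin m → Letter,
      stw (List.ofFn (Fin.cons x w)) =
        if (insert x (stw (List.ofFn w))).card ≤ 2 then insert x (stw (List.ofFn w))
        else {x} := by
    intro x w
    rw [ofFn_cons, stw_cons]
  calc ∑ x : Letter, ∑ w : Fin m → Letter,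
        (if (stw (List.ofFn (Fin.cons x w))).card = 2 then 1 else 0)
      = ∑ w : Fin m → Letter, ∑ x : Letter,
        (if ((if (insert x (stw (List.ofFn w))).card ≤ 2 then insert x (stw (List.ofFn w))
          else {x}).card = 2) then 1 else 0) := by
        rw [Finset.sum_comm]
        refine Finset.sum_congr rfl fun w _ => Finset.sum_congr rfl fun x _ => ?_
        rw [h1 x w]
    _ = ∑ _w : Fin m → Letter, 2 := by
        refine Finset.sum_congr rfl fun w _ => ?_
        exact sum_delta2 _ (stw_nonempty (ofFn_ne_nil hm w)) (stw_card_le _)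
    _ = 2 * 3^m := by
        rw [Finset.sum_const, Finset.card_univ, card_fun_letter]
        ring

lemma SN_closed : ∀ k : ℕ, SN (k+2) = (2*k+9) * 3^k := by
  intro k
  induction k with
  | zero =>
    rw [show (0:ℕ)+2 = 1+1 from rfl, SN_succ le_rfl, SN_one, C2_one]
    norm_num
  | succ k ih =>
    rw [show k+1+2 = (k+2)+1 from rfl, SN_succ (by omega), ih, C2_succ (by omega)]
    ring

lemma ANs_closed : ∀ k : ℕ, ANs (k+1) = (k+3) * 3^k := by
  intro k
  induction k with
  | zero =>
    rw [ANs, show (0:ℕ)+1+1 = 2 from rfl, Finset.sum_range_succ, Finset.sum_range_succ,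
      Finset.sum_range_zero, SN_zero, SN_one]
    norm_num
  | succ k ih =>
    rw [ANs, Finset.sum_range_succ, ← ANs, ih, SN_closed]
    ring

lemma NN_eq (t : ℕ) : 2 * NN t + 1 = 3^(t+1) := by
  induction t with
  | zero => rfl
  | succ t ih =>
    rw [NN, Finset.sum_range_succ, ← NN]
    rw [pow_succ 3 (t+1)] at *
    omega

/-! ### Sum of lcp lengths -/

def GN (k l : ℕ) : ℕ :=
  ∑ v : Fin k → Letter, ∑ w : Fin l → Letter, (lcp (List.ofFn v) (List.ofFn w)).length

lemma GN_zero_left (l : ℕ) : GN 0 l = 0 := by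
  rw [GN]
  simp

lemma GN_zero_right (k : ℕ) : GN k 0 = 0 := by
  rw [GN]
  simp

lemma GN_succ (k l : ℕ) : GN (k+1) (l+1) = 3 * (3^(k+l) + GN k l) := by
  rw [GN, sum_pi_succ]
  have step1 : ∀ x : Letter, ∀ a : Fin k → Letter,
      (∑ w : Fin (l+1) → Letter, (lcp (List.ofFn (Fin.cons x a)) (List.ofFn w)).length)
      = ∑ b : Fin l → Letter, ((lcp (List.ofFn a) (List.ofFn b)).length + 1) := by
    intro x a
    rw [sum_pi_succ]
    have hev : ∀ y : Letter, ∀ b : Fin l → Letter,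
        (lcp (List.ofFn (Fin.cons x a)) (List.ofFn (Fin.cons y b))).length
        = if x = y then (lcp (List.ofFn a) (List.ofFn b)).length + 1 else 0 := by
      intro y b
      rw [ofFn_cons, ofFn_cons, lcp_cons]
      split <;> simp
    calc ∑ y : Letter, ∑ b : Fin l → Letter,
          (lcp (List.ofFn (Fin.cons x a)) (List.ofFn (Fin.cons y b))).length
        = ∑ y : Letter, (if x = y then
            ∑ b : Fin l → Letter, ((lcp (List.ofFn a) (List.ofFn b)).length + 1) else 0) := by
          refine Finset.sum_congr rfl fun y _ => ?_
          by_cases hxy : x = y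
          · rw [if_pos hxy]
            exact Finset.sum_congr rfl fun b _ => by rw [hev y b, if_pos hxy]
          · rw [if_neg hxy]
            exact Finset.sum_eq_zero fun b _ => by rw [hev y b, if_neg hxy]
      _ = ∑ b : Fin l → Letter, ((lcp (List.ofFn a) (List.ofFn b)).length + 1) := by
          rw [Finset.sum_ite_eq]
          simp
  calc ∑ x : Letter, ∑ a : Fin k → Letter,
        ∑ w : Fin (l+1) → Letter, (lcp (List.ofFn (Fin.cons x a)) (List.ofFn w)).length
      = ∑ x : Letter, ∑ a : Fin k → Letter,
          ∑ b : Fin l → Letter, ((lcp (List.ofFn a) (List.ofFn b)).length + 1) := by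
        exact Finset.sum_congr rfl fun x _ => Finset.sum_congr rfl fun a _ => step1 x a
    _ = ∑ x : Letter, (GN k l + 3^(k+l)) := by
        refine Finset.sum_congr rfl fun x _ => ?_
        rw [Finset.sum_congr rfl fun a (_ : a ∈ Finset.univ) => Finset.sum_add_distrib,
          Finset.sum_add_distrib, ← GN]
        congr 1
        rw [Finset.sum_const, Finset.sum_const, Finset.card_univ, Finset.card_univ,
          card_fun_letter, card_fun_letter]
        simp [pow_add]
    _ = 3 * (3^(k+l) + GN k l) := by
        rw [Finset.sum_const, Finset.card_univ, smul_eq_mul]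
        have h3 : Fintype.card Letter = 3 := by simp
        rw [h3]
        ring
  
lemma GN_le : ∀ k l : ℕ, 2 * GN k l ≤ 3^(k+l) := by
  intro k
  induction k with
  | zero =>
    intro l
    rw [GN_zero_left]
    simp
  | succ k ih =>
    intro l
    cases l with
    | zero =>
      rw [GN_zero_right]
      simp
    | succ l =>
      rw [GN_succ]
      have h1 := ih l
      have h2 : k + 1 + (l + 1) = k + l + 2 := by omega
      rw [h2, pow_succ, pow_succ]
      omega

/-! ### Bounds on the pair sum -/

noncomputable def PN (t : ℕ) : ℕ :=
  ∑ k ∈ Finset.range (t+1), ∑ l ∈ Finset.range (t+1),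
    ∑ v : Fin k → Letter, ∑ w : Fin l → Letter, dW t (List.ofFn v) (List.ofFn w)

lemma pairSum_eq (t : ℕ) : pairSum t = (PN t : ℝ) := by
  rw [pairSum, PN]
  push_cast
  rfl

lemma length_ofFn_le {t k : ℕ} (hk : k ∈ Finset.range (t+1)) (v : Fin k → Letter) :
    (List.ofFn v).length ≤ t := by
  have := Finset.mem_range.mp hk
  simp only [List.length_ofFn]
  omega

lemma sum4_left (t : ℕ) (f : Word → ℕ) :
    (∑ k ∈ Finset.range (t+1), ∑ l ∈ Finset.range (t+1),
      ∑ v : Fin k → Letter, ∑ _w : Fin l → Letter, f (List.ofFn v))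
    = NN t * ∑ k ∈ Finset.range (t+1), ∑ v : Fin k → Letter, f (List.ofFn v) := by
  rw [Finset.mul_sum]
  refine Finset.sum_congr rfl fun k _ => ?_
  calc ∑ l ∈ Finset.range (t+1), ∑ v : Fin k → Letter, ∑ _w : Fin l → Letter, f (List.ofFn v)
      = ∑ l ∈ Finset.range (t+1), 3^l * ∑ v : Fin k → Letter, f (List.ofFn v) := by
        refine Finset.sum_congr rfl fun l _ => ?_
        rw [← Finset.sum_comm]
        rw [Finset.sum_const, Finset.card_univ, card_fun_letter, smul_eq_mul]
    _ = NN t * ∑ v : Fin k → Letter, f (List.ofFn v) := by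
        rw [← Finset.sum_mul, NN]

lemma sum4_right (t : ℕ) (f : Word → ℕ) :
    (∑ k ∈ Finset.range (t+1), ∑ l ∈ Finset.range (t+1),
      ∑ _v : Fin k → Letter, ∑ w : Fin l → Letter, f (List.ofFn w))
    = NN t * ∑ l ∈ Finset.range (t+1), ∑ w : Fin l → Letter, f (List.ofFn w) := by
  calc (∑ k ∈ Finset.range (t+1), ∑ l ∈ Finset.range (t+1),
      ∑ _v : Fin k → Letter, ∑ w : Fin l → Letter, f (List.ofFn w))
      = ∑ k ∈ Finset.range (t+1),
          3^k * ∑ l ∈ Finset.range (t+1), ∑ w : Fin l → Letter, f (List.ofFn w) := by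
        refine Finset.sum_congr rfl fun k _ => ?_
        rw [Finset.mul_sum]
        refine Finset.sum_congr rfl fun l _ => ?_
        rw [Finset.sum_const, Finset.card_univ, card_fun_letter, smul_eq_mul]
    _ = NN t * ∑ l ∈ Finset.range (t+1), ∑ w : Fin l → Letter, f (List.ofFn w) := by
        rw [← Finset.sum_mul, NN]

lemma sum_om_eq (t : ℕ) :
    (∑ k ∈ Finset.range (t+1), ∑ l ∈ Finset.range (t+1),
      ∑ v : Fin k → Letter, ∑ w : Fin l → Letter,
        (om (List.ofFn v) + om (List.ofFn w)))
    = 2 * (NN t * ANs t) := by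
  have hsplit : (∑ k ∈ Finset.range (t+1), ∑ l ∈ Finset.range (t+1),
      ∑ v : Fin k → Letter, ∑ w : Fin l → Letter,
        (om (List.ofFn v) + om (List.ofFn w)))
      = (∑ k ∈ Finset.range (t+1), ∑ l ∈ Finset.range (t+1),
      ∑ v : Fin k → Letter, ∑ _w : Fin l → Letter, om (List.ofFn v))
      + (∑ k ∈ Finset.range (t+1), ∑ l ∈ Finset.range (t+1),
      ∑ _v : Fin k → Letter, ∑ w : Fin l → Letter, om (List.ofFn w)) := by
    simp only [Finset.sum_add_distrib]
  rw [hsplit, sum4_left, sum4_right]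
  have hA : (∑ k ∈ Finset.range (t+1), ∑ v : Fin k → Letter, om (List.ofFn v)) = ANs t := rfl
  rw [hA]
  ring

lemma sum_ones_eq (t : ℕ) :
    (∑ k ∈ Finset.range (t+1), ∑ l ∈ Finset.range (t+1),
      ∑ _v : Fin k → Letter, ∑ _w : Fin l → Letter, 1)
    = NN t * NN t := by
  rw [sum4_left t (fun _ => 1)]
  congr 1
  rw [NN]
  refine Finset.sum_congr rfl fun k _ => ?_
  rw [Finset.sum_const, Finset.card_univ, card_fun_letter, smul_eq_mul, mul_one]

lemma sum_lcp_le (t : ℕ) :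
    2 * (∑ k ∈ Finset.range (t+1), ∑ l ∈ Finset.range (t+1),
      ∑ v : Fin k → Letter, ∑ w : Fin l → Letter,
        (lcp (List.ofFn v) (List.ofFn w)).length)
    ≤ NN t * NN t := by
  have h1 : (∑ k ∈ Finset.range (t+1), ∑ l ∈ Finset.range (t+1),
      ∑ v : Fin k → Letter, ∑ w : Fin l → Letter,
        (lcp (List.ofFn v) (List.ofFn w)).length)
      = ∑ k ∈ Finset.range (t+1), ∑ l ∈ Finset.range (t+1), GN k l := rfl
  have h2 : NN t * NN t = ∑ k ∈ Finset.range (t+1), ∑ l ∈ Finset.range (t+1), 3^(k+l) := by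
    rw [NN, Finset.sum_mul_sum]
    refine Finset.sum_congr rfl fun k _ => Finset.sum_congr rfl fun l _ => ?_
    rw [pow_add]
  rw [h1, h2, Finset.mul_sum]
  refine Finset.sum_le_sum fun k _ => ?_
  rw [Finset.mul_sum]
  exact Finset.sum_le_sum fun l _ => GN_le k l

lemma PN_le (t : ℕ) : PN t ≤ 2 * (NN t * ANs t) := by
  rw [← sum_om_eq, PN]
  refine Finset.sum_le_sum fun k hk => Finset.sum_le_sum fun l hl =>
    Finset.sum_le_sum fun v _ => Finset.sum_le_sum fun w _ => ?_
  exact dist_le_om (length_ofFn_le hk v) (length_ofFn_le hl w)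

lemma le_PN (t : ℕ) : 2 * (NN t * ANs t) ≤ PN t + 2 * (NN t * NN t) := by
  have step1 : 2 * (NN t * ANs t) ≤
      ∑ k ∈ Finset.range (t+1), ∑ l ∈ Finset.range (t+1),
        ∑ v : Fin k → Letter, ∑ w : Fin l → Letter,
          (dW t (List.ofFn v) (List.ofFn w)
            + (2 * (lcp (List.ofFn v) (List.ofFn w)).length + 1)) := by
    rw [← sum_om_eq]
    refine Finset.sum_le_sum fun k hk => Finset.sum_le_sum fun l hl =>
      Finset.sum_le_sum fun v _ => Finset.sum_le_sum fun w _ => ?_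
    have := om_add_le_dist (t := t) (length_ofFn_le hk v) (length_ofFn_le hl w)
    rw [dW]
    omega
  have step2 : (∑ k ∈ Finset.range (t+1), ∑ l ∈ Finset.range (t+1),
        ∑ v : Fin k → Letter, ∑ w : Fin l → Letter,
          (dW t (List.ofFn v) (List.ofFn w)
            + (2 * (lcp (List.ofFn v) (List.ofFn w)).length + 1)))
      = PN t
        + (2 * (∑ k ∈ Finset.range (t+1), ∑ l ∈ Finset.range (t+1),
            ∑ v : Fin k → Letter, ∑ w : Fin l → Letter,
              (lcp (List.ofFn v) (List.ofFn w)).length)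
          + (∑ k ∈ Finset.range (t+1), ∑ l ∈ Finset.range (t+1),
            ∑ _v : Fin k → Letter, ∑ _w : Fin l → Letter, 1)) := by
    rw [PN]
    simp only [Finset.sum_add_distrib, Finset.mul_sum]
  have step3 := sum_lcp_le t
  rw [step2, sum_ones_eq] at step1
  omega

/-! ### The limit -/

lemma Nv_eq_NN (t : ℕ) : Nv t = (NN t : ℝ) := by
  have h := NN_eq t
  have h' : (2:ℝ) * (NN t : ℝ) + 1 = 3^(t+1) := by exact_mod_cast congrArg (Nat.cast (R := ℝ)) h
  rw [Nv]
  linarith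

lemma Nv_ge {t : ℕ} (ht : 1 ≤ t) : (4:ℝ) ≤ Nv t := by
  rw [Nv]
  have h9 : (9:ℝ) ≤ 3^(t+1) := by
    calc (9:ℝ) = 3^2 := by norm_num
    _ ≤ 3^(t+1) := pow_le_pow_right₀ (by norm_num) (by omega)
  linarith

noncomputable def Ut (t : ℕ) : ℝ := 2 * (ANs t : ℝ) / ((Nv t - 1) * t)
noncomputable def Et (t : ℕ) : ℝ := 2 * Nv t / ((Nv t - 1) * t)

lemma Dbar_bounds {t : ℕ} (ht : 1 ≤ t) :
    Ut t - Et t ≤ Dbar t / t ∧ Dbar t / t ≤ Ut t := by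
  have hNv := Nv_ge ht
  have ht' : (1:ℝ) ≤ (t:ℝ) := by exact_mod_cast ht
  have hd1 : (0:ℝ) < Nv t := by linarith
  have hd2 : (0:ℝ) < Nv t - 1 := by linarith
  have hd3 : (0:ℝ) < (t:ℝ) := by linarith
  have hdenom : (0:ℝ) < Nv t * (Nv t - 1) * (t:ℝ) := by positivity
  have hD : Dbar t / t = pairSum t / (Nv t * (Nv t - 1) * t) := by
    rw [Dbar, div_div]
  have hub : pairSum t ≤ 2 * (Nv t * (ANs t : ℝ)) := by
    rw [pairSum_eq, Nv_eq_NN]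
    exact_mod_cast PN_le t
  have hlb : 2 * (Nv t * (ANs t : ℝ)) - 2 * (Nv t * Nv t) ≤ pairSum t := by
    rw [pairSum_eq, Nv_eq_NN]
    have hc : ((2 * (NN t * ANs t) : ℕ) : ℝ) ≤ ((PN t + 2 * (NN t * NN t) : ℕ) : ℝ) := by
      exact_mod_cast le_PN t
    push_cast at hc
    linarith
  constructor
  · rw [hD]
    have heq : Ut t - Et t
        = (2 * (Nv t * (ANs t : ℝ)) - 2 * (Nv t * Nv t)) / (Nv t * (Nv t - 1) * t) := by
      rw [Ut, Et]
      field_simp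
    rw [heq]
    exact (div_le_div_iff_of_pos_right hdenom).mpr hlb
  · rw [hD]
    have heq : Ut t = (2 * (Nv t * (ANs t : ℝ))) / (Nv t * (Nv t - 1) * t) := by
      rw [Ut]
      field_simp
    rw [heq]
    exact (div_le_div_iff_of_pos_right hdenom).mpr hub

lemma tendsto_Ut : Tendsto Ut atTop (nhds (4/9)) := by
  have hf : Tendsto (fun t : ℕ => ((t:ℝ)+2)/t) atTop (nhds 1) := by
    have h1 : Tendsto (fun t : ℕ => 1 + 2/(t:ℝ)) atTop (nhds (1+0)) :=
      tendsto_const_nhds.add (Tendsto.div_atTop tendsto_const_nhds tendsto_natCast_atTop_atTop)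
    have h2 : ∀ᶠ t : ℕ in atTop, 1 + 2/(t:ℝ) = ((t:ℝ)+2)/t := by
      filter_upwards [eventually_ge_atTop 1] with t ht
      have htne : (t:ℝ) ≠ 0 := by
        have : (1:ℝ) ≤ (t:ℝ) := by exact_mod_cast ht
        linarith
      field_simp
    rw [show (1:ℝ) = 1 + 0 by norm_num]
    exact Tendsto.congr' h2 h1
  have hg : Tendsto (fun t : ℕ => (3:ℝ)^t/((3:ℝ)^t - 1)) atTop (nhds 1) := by
    have hpow : Tendsto (fun t : ℕ => (3:ℝ)^t - 1) atTop atTop := by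
      have h3 := tendsto_pow_atTop_atTop_of_one_lt (show (1:ℝ) < 3 by norm_num)
      simpa [sub_eq_add_neg] using Filter.tendsto_atTop_add_const_right atTop (-1 : ℝ) h3
    have h1 : Tendsto (fun t : ℕ => 1 + ((3:ℝ)^t - 1)⁻¹) atTop (nhds (1+0)) :=
      tendsto_const_nhds.add hpow.inv_tendsto_atTop
    have h2 : ∀ᶠ t : ℕ in atTop, 1 + ((3:ℝ)^t - 1)⁻¹ = (3:ℝ)^t/((3:ℝ)^t - 1) := by
      filter_upwards [eventually_ge_atTop 1] with t ht
      have h3t : (3:ℝ) ≤ 3^t := by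
        calc (3:ℝ) = 3^1 := (pow_one 3).symm
        _ ≤ 3^t := pow_le_pow_right₀ (by norm_num) ht
      have hne : (3:ℝ)^t - 1 ≠ 0 := ne_of_gt (by linarith)
      field_simp
      ring
    have := Tendsto.congr' h2 h1
    simpa using this
  have hW : Tendsto (fun t : ℕ => (4:ℝ)/9 * (((t:ℝ)+2)/t) * ((3:ℝ)^t/((3:ℝ)^t - 1)))
      atTop (nhds (4/9)) := by
    have := (tendsto_const_nhds (x := (4:ℝ)/9) (f := atTop (α := ℕ))).mul hf |>.mul hg
    simpa using this
  refine Tendsto.congr' ?_ hW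
  filter_upwards [eventually_ge_atTop 1] with t ht
  obtain ⟨k, rfl⟩ : ∃ k, t = k + 1 := ⟨t - 1, by omega⟩
  have hANs : ((ANs (k+1) : ℕ) : ℝ) = ((k:ℝ)+3) * 3^k := by
    rw [ANs_closed k]
    push_cast
    ring
  rw [Ut, hANs, Nv]
  have e1 : (3:ℝ)^(k+1+1) = 3^k*3*3 := by rw [pow_succ, pow_succ]
  have e2 : (3:ℝ)^(k+1) = 3^k*3 := by rw [pow_succ]
  rw [e1, e2]
  have hx : (1:ℝ) ≤ 3^k := one_le_pow₀ (by norm_num)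
  have hk1 : (0:ℝ) < (k:ℝ)+1 := by positivity
  have hne1 : ((k:ℝ)+1) ≠ 0 := ne_of_gt hk1
  have hne2 : (3:ℝ)^k*3 - 1 ≠ 0 := ne_of_gt (by linarith)
  have hcast : ((k+1 : ℕ) : ℝ) = (k:ℝ)+1 := by push_cast; ring
  rw [hcast]
  have e3 : ((3:ℝ)^k*3*3 - 1)/2 - 1 = (9*3^k - 3)/2 := by ring
  rw [e3]
  have hne5 : (9*(3:ℝ)^k - 3) ≠ 0 := ne_of_gt (by linarith)
  field_simp
  ring

lemma tendsto_Et : Tendsto Et atTop (nhds 0) := by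
  have h4t : Tendsto (fun t : ℕ => 4/(t:ℝ)) atTop (nhds 0) :=
    Tendsto.div_atTop tendsto_const_nhds tendsto_natCast_atTop_atTop
  refine tendsto_of_tendsto_of_tendsto_of_le_of_le' tendsto_const_nhds h4t ?_ ?_
  · filter_upwards [eventually_ge_atTop 1] with t ht
    have hNv := Nv_ge ht
    have ht' : (1:ℝ) ≤ (t:ℝ) := by exact_mod_cast ht
    have : (0:ℝ) < 2 * Nv t / ((Nv t - 1) * t) := by
      apply div_pos (by linarith)
      have : (0:ℝ) < Nv t - 1 := by linarith
      positivity
    rw [Et]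
    linarith
  · filter_upwards [eventually_ge_atTop 1] with t ht
    have hNv := Nv_ge ht
    have ht' : (1:ℝ) ≤ (t:ℝ) := by exact_mod_cast ht
    have hd2 : (0:ℝ) < Nv t - 1 := by linarith
    have hd3 : (0:ℝ) < (t:ℝ) := by linarith
    rw [Et, div_le_div_iff₀ (by positivity) hd3]
    nlinarith

lemma main_limit : Tendsto (fun t : ℕ => Dbar t / t) atTop (nhds (4 / 9)) := by
  have h1 := tendsto_Ut
  have h2 := tendsto_Et
  have h3 : Tendsto (fun t => Ut t - Et t) atTop (nhds (4/9 - 0)) := h1.sub h2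
  rw [sub_zero] at h3
  refine tendsto_of_tendsto_of_tendsto_of_le_of_le' h3 h1 ?_ ?_
  · filter_upwards [eventually_ge_atTop 1] with t ht
    exact (Dbar_bounds ht).1
  · filter_upwards [eventually_ge_atTop 1] with t ht
    exact (Dbar_bounds ht).2

end APL

/-- The average path length of `G_t` satisfies `lim_{t→∞} D̄(t)/t = 4/9`. -/
theorem average_path_length_asymptotics :
    Tendsto (fun t : ℕ => Dbar t / t) atTop (nhds (4 / 9)) := APL.main_limit
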